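/- arXiv:1810.02703 — 2 statements merged into one kernel-verified Lean document; each statement's English description precedes it below -/
import Mathlib

section
/- Let u be an n×n upper-triangular complex matrix with 1's on the diagonal and λ an n×n strictly lower-triangular complex matrix. Then for every pair (i,j) with i > j, the rank of the lower-left submatrix of (uλu⁻¹)_low with rows i, i+1, ..., n and columns 1, ..., j equals the rank of the corresponding submatrix of λ, where A_low denotes the strictly lower-triangular part of A. -/
open Matrix Finset

/-- Sum over a fintype restricted to a subtype when the function vanishes outside. -/
lemma sum_subtype_of_vanish {α : Type*} [Fintype α] {P : α → Prop} [DecidablePred P]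
    (f : α → ℂ) (h : ∀ a, ¬ P a → f a = 0) :
    ∑ a : α, f a = ∑ a : Subtype P, f (a : α) := by
  rw [← Finset.sum_subtype (Finset.univ.filter P) (by simp) f]
  rw [Finset.sum_filter_of_ne (fun x _ hx => by by_contra hP; exact hx (h x hP))]

/-- The strictly lower-triangular part of a matrix. -/
def matLow {n : ℕ} (A : Matrix (Fin n) (Fin n) ℂ) : Matrix (Fin n) (Fin n) ℂ :=
  Matrix.of fun p q => if q < p then A p q else 0

/-- Let `u` be upper-triangular with unit diagonal and `lam` strictly lower-triangular.
Then for every pair `(i,j)` with `i > j`, the rank of the lower-left submatrix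
(rows `i,…,n`, columns `1,…,j`) of `(u * lam * u⁻¹)_low` equals the rank of the
corresponding submatrix of `lam`. -/
theorem stmt4 (n : ℕ) (u lam : Matrix (Fin n) (Fin n) ℂ)
    (hu : ∀ p q : Fin n, q < p → u p q = 0) (hud : ∀ p : Fin n, u p p = 1)
    (hlam : ∀ p q : Fin n, p ≤ q → lam p q = 0)
    (i j : Fin n) (hij : j < i) :
    ((matLow (u * lam * u⁻¹)).submatrix
        (fun p : {p : Fin n // i ≤ p} => (p : Fin n))
        (fun q : {q : Fin n // q ≤ j} => (q : Fin n))).rank =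
    (lam.submatrix
        (fun p : {p : Fin n // i ≤ p} => (p : Fin n))
        (fun q : {q : Fin n // q ≤ j} => (q : Fin n))).rank := by
  classical
  have hbt : u.BlockTriangular id := fun p q h => hu p q h
  have hdet : u.det = 1 := by
    rw [Matrix.det_of_upperTriangular hbt]; simp [hud]
  have hdetU : IsUnit u.det := by rw [hdet]; exact isUnit_one
  haveI : Invertible u := u.invertibleOfIsUnitDet hdetU
  have hbtinv : (u⁻¹).BlockTriangular id :=
    Matrix.blockTriangular_inv_of_blockTriangular hbt
  have huinv : ∀ p q : Fin n, q < p → u⁻¹ p q = 0 := fun p q h => hbtinv h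
  set PI := {p : Fin n // i ≤ p}
  set QJ := {q : Fin n // q ≤ j}
  set U : Matrix PI PI ℂ := u.submatrix (fun p => (p : Fin n)) (fun p => (p : Fin n)) with hU
  set L : Matrix PI QJ ℂ := lam.submatrix (fun p => (p : Fin n)) (fun q => (q : Fin n)) with hL
  set V : Matrix QJ QJ ℂ := (u⁻¹).submatrix (fun q => (q : Fin n)) (fun q => (q : Fin n)) with hV
  set W : Matrix QJ QJ ℂ := u.submatrix (fun q => (q : Fin n)) (fun q => (q : Fin n)) with hW
  -- Claim 1: the LHS matrix equals U * L * V
  have key : (matLow (u * lam * u⁻¹)).submatrix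
        (fun p : PI => (p : Fin n)) (fun q : QJ => (q : Fin n)) = U * L * V := by
    ext p q
    have hpq : (q : Fin n) < (p : Fin n) := lt_of_le_of_lt q.2 (lt_of_lt_of_le hij p.2)
    simp only [Matrix.submatrix_apply, matLow, Matrix.of_apply, if_pos hpq]
    rw [Matrix.mul_apply, Matrix.mul_apply]
    have step1 : ∀ l : Fin n, (u * lam) (p : Fin n) l =
        ∑ k : PI, u (p : Fin n) (k : Fin n) * lam (k : Fin n) l := by
      intro l
      rw [Matrix.mul_apply]
      exact sum_subtype_of_vanish _ (fun k hk => by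
        rw [hu (p : Fin n) k (lt_of_not_ge (fun h => hk (le_trans p.2 h))), zero_mul])
    have step2 : ∑ l : Fin n, (u * lam) (p : Fin n) l * u⁻¹ l (q : Fin n) =
        ∑ l : QJ, (u * lam) (p : Fin n) (l : Fin n) * u⁻¹ (l : Fin n) (q : Fin n) := by
      refine sum_subtype_of_vanish _ (fun l hl => ?_)
      rw [huinv l (q : Fin n) (lt_of_le_of_lt q.2 (lt_of_not_ge hl)), mul_zero]
    rw [step2]
    refine Finset.sum_congr rfl (fun l _ => ?_)
    rw [step1, Matrix.mul_apply]
    simp only [hU, hL, hV, Matrix.submatrix_apply, Finset.sum_mul]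
  -- U is invertible
  have hdetUU : IsUnit U.det := by
    have hbtU : U.BlockTriangular id := fun a b hab => hu _ _ hab
    rw [Matrix.det_of_upperTriangular hbtU]
    simp [hU, hud]
  -- V is invertible : V * W = 1
  have hVW : V * W = 1 := by
    ext a b
    rw [Matrix.mul_apply]
    have : ∑ l : Fin n, u⁻¹ (a : Fin n) l * u l (b : Fin n) =
        ∑ l : QJ, u⁻¹ (a : Fin n) (l : Fin n) * u (l : Fin n) (b : Fin n) := by
      refine sum_subtype_of_vanish _ (fun l hl => ?_)
      rw [hu l (b : Fin n) (lt_of_le_of_lt b.2 (lt_of_not_ge hl)), mul_zero]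
    simp only [hV, hW, Matrix.submatrix_apply]
    rw [← this, ← Matrix.mul_apply, Matrix.nonsing_inv_mul u hdetU]
    by_cases hab : a = b
    · subst hab; simp
    · have : (a : Fin n) ≠ (b : Fin n) := fun h => hab (Subtype.ext h)
      simp [Matrix.one_apply, hab, this]
  have hdetV : IsUnit V.det := by
    have h1 : V.det * W.det = 1 := by rw [← Matrix.det_mul, hVW, Matrix.det_one]
    exact IsUnit.of_mul_eq_one _ h1
  rw [key, Matrix.rank_mul_eq_left_of_isUnit_det V (U * L) hdetV,
    Matrix.rank_mul_eq_right_of_isUnit_det U L hdetUU]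
end

section
/- Let σ be a basis involution in the hyperoctahedral group W of rank n. Then there is a unique set D of pairwise orthogonal roots contained in {ε_i - ε_j : i<j} ∪ {ε_i + ε_j : i<j} ⊆ B_n⁺ such that σ = Π_{α∈D} s_α, where s_{ε_i-ε_j} = (i,j)(-j,-i) and s_{ε_i+ε_j} = (i,-j)(j,-i) in S_{±n}. -/
/-- Roots of the form `ε_i ± ε_j` with `i < j`: the pair `(i,j)` together with a sign
(`true` for `ε_i + ε_j`, `false` for `ε_i - ε_j`). -/
def SRoot (n : ℕ) : Type :=
  {p : Fin n × Fin n // p.1 < p.2} × Bool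

instance (n : ℕ) : DecidableEq (SRoot n) := by
  unfold SRoot; infer_instance

/-- The vector in `ℝⁿ` corresponding to the root. -/
noncomputable def rootVec {n : ℕ} (r : SRoot n) : EuclideanSpace ℝ (Fin n) :=
  EuclideanSpace.single r.1.1.1 (1 : ℝ) +
    (if r.2 then (1 : ℝ) else -1) • EuclideanSpace.single r.1.1.2 (1 : ℝ)

/-- The reflection `s_α ∈ S_{±n}` of the root `α`: `s_{ε_i-ε_j} = (i,j)(-j,-i)` and
`s_{ε_i+ε_j} = (i,-j)(j,-i)`, acting on `{±1,…,±n}` modelled as `Fin n × Bool`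
(`(i,true)` is the positive letter, `(i,false)` the negative one). -/
def rootPerm {n : ℕ} (r : SRoot n) : Equiv.Perm (Fin n × Bool) :=
  if r.2 then
    Equiv.swap (r.1.1.1, true) (r.1.1.2, false) * Equiv.swap (r.1.1.2, true) (r.1.1.1, false)
  else
    Equiv.swap (r.1.1.1, true) (r.1.1.2, true) * Equiv.swap (r.1.1.1, false) (r.1.1.2, false)

namespace Stmt14Aux

variable {n : ℕ}

instance : Fintype (SRoot n) := by unfold SRoot; infer_instance

/-- first index -/
def _root_.SRoot.ia (r : SRoot n) : Fin n := r.1.1.1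
/-- second index -/
def _root_.SRoot.ja (r : SRoot n) : Fin n := r.1.1.2
/-- sign as a real -/
def _root_.SRoot.c (r : SRoot n) : ℝ := if r.2 then 1 else -1

lemma _root_.SRoot.ilt (r : SRoot n) : r.ia < r.ja := r.1.2

lemma sroot_ext {x y : SRoot n} (h1 : x.1.1 = y.1.1) (h2 : x.2 = y.2) : x = y := by
  obtain ⟨⟨px, hx⟩, bx⟩ := x; obtain ⟨⟨py, hy⟩, by'⟩ := y
  simp only at h1 h2; subst h1 h2; rfl

/-- `r` disjoint from `s` (no common index). -/
def Disj (r s : SRoot n) : Prop :=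
  r.ia ≠ s.ia ∧ r.ia ≠ s.ja ∧ r.ja ≠ s.ia ∧ r.ja ≠ s.ja

lemma rootPerm_apply (r : SRoot n) (k : Fin n) (t : Bool) :
    rootPerm r (k, t) =
      if k = r.ia then (r.ja, xor r.2 t)
      else if k = r.ja then (r.ia, xor r.2 t)
      else (k, t) := by
  have hne : r.ia ≠ r.ja := ne_of_lt r.ilt
  obtain ⟨⟨⟨i, j⟩, hij⟩, b⟩ := r
  simp only [SRoot.ia, SRoot.ja] at *
  cases b <;> cases t <;>
    simp [rootPerm, Equiv.swap_apply_def, Prod.ext_iff] <;>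
    split_ifs <;> simp_all

lemma rootPerm_fix (r : SRoot n) (k : Fin n) (t : Bool)
    (h1 : k ≠ r.ia) (h2 : k ≠ r.ja) : rootPerm r (k, t) = (k, t) := by
  rw [rootPerm_apply, if_neg h1, if_neg h2]

lemma inner_single_single (a b : Fin n) :
    (inner ℝ (EuclideanSpace.single a (1:ℝ)) (EuclideanSpace.single b (1:ℝ)) : ℝ)
      = if a = b then 1 else 0 := by
  rw [EuclideanSpace.inner_single_left]
  simp [EuclideanSpace.single_apply]

lemma inner_rootVec (r1 r2 : SRoot n) :
    (inner ℝ (rootVec r1) (rootVec r2) : ℝ) =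
      (if r1.ia = r2.ia then 1 else 0) + (if r1.ia = r2.ja then r2.c else 0)
      + (if r1.ja = r2.ia then r1.c else 0) + (if r1.ja = r2.ja then r1.c * r2.c else 0) := by
  simp only [rootVec, SRoot.ia, SRoot.ja, SRoot.c]
  rw [inner_add_left, inner_add_right, inner_add_right, real_inner_smul_left,
    real_inner_smul_right, real_inner_smul_left, real_inner_smul_right,
    inner_single_single, inner_single_single, inner_single_single, inner_single_single]
  ring_nf
  split_ifs <;> simp_all <;> ring

lemma inner_of_disj {r1 r2 : SRoot n} (h : Disj r1 r2) :
    (inner ℝ (rootVec r1) (rootVec r2) : ℝ) = 0 := by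
  obtain ⟨h1, h2, h3, h4⟩ := h
  rw [inner_rootVec, if_neg h1, if_neg h2, if_neg h3, if_neg h4]; ring

lemma orth_cases {r1 r2 : SRoot n}
    (h : (inner ℝ (rootVec r1) (rootVec r2) : ℝ) = 0) : r1.1.1 = r2.1.1 ∨ Disj r1 r2 := by
  have l1 := r1.ilt; have l2 := r2.ilt
  rw [inner_rootVec] at h
  have hc1 : r1.c = 1 ∨ r1.c = -1 := by cases hb : r1.2 <;> simp [SRoot.c, hb]
  have hc2 : r2.c = 1 ∨ r2.c = -1 := by cases hb : r2.2 <;> simp [SRoot.c, hb]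
  by_cases e11 : r1.ia = r2.ia
  · have e12 : ¬ r1.ia = r2.ja := fun hh => ne_of_lt l2 (e11.symm.trans hh)
    have e21 : ¬ r1.ja = r2.ia := fun hh => ne_of_gt l1 (hh.trans e11.symm)
    by_cases e22 : r1.ja = r2.ja
    · exact Or.inl (Prod.ext_iff.mpr ⟨e11, e22⟩)
    · exfalso
      rw [if_pos e11, if_neg e12, if_neg e21, if_neg e22] at h
      norm_num at h
  · by_cases e22 : r1.ja = r2.ja
    · have e12 : ¬ r1.ia = r2.ja := fun hh => ne_of_lt l1 (hh.trans e22.symm)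
      have e21 : ¬ r1.ja = r2.ia := fun hh => ne_of_lt l2 (hh.symm.trans e22)
      rw [if_neg e11, if_neg e12, if_neg e21, if_pos e22] at h
      exfalso
      rcases hc1 with h1 | h1 <;> rcases hc2 with h2 | h2 <;> rw [h1, h2] at h <;> norm_num at h
    · by_cases e12 : r1.ia = r2.ja
      · have e21 : ¬ r1.ja = r2.ia := by
          intro hh
          have : r1.ja < r1.ia := by rw [hh, e12]; exact l2
          exact absurd l1 (not_lt.mpr this.le)
        rw [if_neg e11, if_pos e12, if_neg e21, if_neg e22] at h
        exfalso
        rcases hc2 with h2 | h2 <;> rw [h2] at h <;> norm_num at h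
      · by_cases e21 : r1.ja = r2.ia
        · rw [if_neg e11, if_neg e12, if_pos e21, if_neg e22] at h
          exfalso
          rcases hc1 with h1 | h1 <;> rw [h1] at h <;> norm_num at h
        · exact Or.inr ⟨e11, e12, e21, e22⟩

lemma prod_fix (l : List (SRoot n)) (k : Fin n) (t : Bool)
    (H : ∀ r ∈ l, k ≠ r.ia ∧ k ≠ r.ja) :
    (l.map rootPerm).prod (k, t) = (k, t) := by
  induction l with
  | nil => simp
  | cons a l ih =>
    rw [List.map_cons, List.prod_cons, Equiv.Perm.mul_apply,
      ih (fun r hr => H r (List.mem_cons_of_mem a hr))]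
    exact rootPerm_fix a k t (H a (List.mem_cons_self)).1 (H a (List.mem_cons_self)).2

lemma prod_pair_fst (i j : Fin n) (hij : i ≠ j) (l : List (SRoot n))
    (H : ∀ r ∈ l, r.1.1 = (i, j)) (k : Fin n) (t : Bool) (hk : k = i ∨ k = j) :
    ((l.map rootPerm).prod (k, t)).1 = i ∨ ((l.map rootPerm).prod (k, t)).1 = j := by
  induction l with
  | nil => simpa
  | cons a l ih =>
    rw [List.map_cons, List.prod_cons, Equiv.Perm.mul_apply]
    have ha := H a (List.mem_cons_self)
    have hia : a.ia = i := by rw [SRoot.ia, ha]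
    have hja : a.ja = j := by rw [SRoot.ja, ha]
    have hq1 := ih (fun r hr => H r (List.mem_cons_of_mem a hr))
    generalize (l.map rootPerm).prod (k, t) = q at hq1 ⊢
    obtain ⟨q1, q2⟩ := q
    simp only at hq1
    rcases hq1 with h1 | h1
    · rw [h1, rootPerm_apply, if_pos hia.symm]
      right; exact hja
    · rw [h1, rootPerm_apply, if_neg (by rw [hia]; exact Ne.symm hij), if_pos hja.symm]
      left; exact hia

/-- the Boolean predicate "has index pair (i,j)" -/
def pairEq (i j : Fin n) (r : SRoot n) : Bool := decide (r.1.1 = (i, j))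

lemma pairEq_iff {i j : Fin n} {r : SRoot n} : pairEq i j r = true ↔ r.1.1 = (i, j) := by
  simp [pairEq]

lemma prod_filter_eval (i j : Fin n) (hij : i ≠ j) (l : List (SRoot n))
    (H : ∀ r ∈ l, r.1.1 = (i, j) ∨ (r.ia ≠ i ∧ r.ia ≠ j ∧ r.ja ≠ i ∧ r.ja ≠ j))
    (k : Fin n) (t : Bool) (hk : k = i ∨ k = j) :
    (l.map rootPerm).prod (k, t) = ((l.filter (pairEq i j)).map rootPerm).prod (k, t) := by
  induction l with
  | nil => simp
  | cons a l ih =>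
    have ih' := ih (fun r hr => H r (List.mem_cons_of_mem a hr))
    rcases H a (List.mem_cons_self) with ha | ha
    · rw [List.filter_cons_of_pos (pairEq_iff.mpr ha), List.map_cons, List.prod_cons,
        Equiv.Perm.mul_apply, List.map_cons, List.prod_cons, Equiv.Perm.mul_apply, ih']
    · rw [List.filter_cons_of_neg (by simp [pairEq]; intro hh; exact absurd (congrArg Prod.fst hh) ha.1),
        List.map_cons, List.prod_cons, Equiv.Perm.mul_apply, ih']
      have hfst := prod_pair_fst i j hij (l.filter (pairEq i j))
        (fun r hr => pairEq_iff.mp (List.of_mem_filter hr)) k t hk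
      generalize ((l.filter (pairEq i j)).map rootPerm).prod (k, t) = q at hfst ⊢
      obtain ⟨q1, q2⟩ := q
      simp only at hfst
      rcases hfst with h1 | h1 <;> subst h1
      · exact rootPerm_fix a _ _ (Ne.symm ha.1) (Ne.symm ha.2.2.1)
      · exact rootPerm_fix a _ _ (Ne.symm ha.2.1) (Ne.symm ha.2.2.2)

lemma eq_single {l : List (SRoot n)} {r : SRoot n} (hnd : l.Nodup) (hr : r ∈ l)
    (hall : ∀ x ∈ l, x = r) : l = [r] := by
  cases l with
  | nil => cases hr
  | cons a l =>
    have ha : a = r := hall a (List.mem_cons_self)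
    cases l with
    | nil => rw [ha]
    | cons b l' =>
      exfalso
      have hb : b = r := hall b (by simp)
      rw [List.nodup_cons] at hnd
      exact hnd.1 (by rw [ha, ← hb]; exact List.mem_cons_self)

lemma neg_apply (σ : Equiv.Perm (Fin n × Bool))
    (hw : ∀ p : Fin n × Bool, σ (p.1, !p.2) = ((σ p).1, !(σ p).2)) (i : Fin n) :
    σ (i, false) = ((σ (i, true)).1, !(σ (i, true)).2) := by
  simpa using hw (i, true)

lemma symm_lemma (σ : Equiv.Perm (Fin n × Bool))
    (hw : ∀ p : Fin n × Bool, σ (p.1, !p.2) = ((σ p).1, !(σ p).2))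
    (hσσ : ∀ p, σ (σ p) = p) {i j : Fin n} {c : Bool}
    (h : σ (i, true) = (j, c)) : σ (j, true) = (i, c) := by
  have h2 : σ (j, c) = (i, true) := by rw [← h, hσσ]
  cases c
  · have h3 := neg_apply σ hw j
    rw [h2] at h3
    rw [Prod.ext_iff] at h3
    simp only at h3
    refine Prod.ext_iff.mpr ⟨h3.1.symm, ?_⟩
    have := h3.2
    cases hb : (σ (j, true)).2
    · rfl
    · rw [hb] at this; simp at this
  · exact h2

lemma core_eval (σ : Equiv.Perm (Fin n × Bool))
    (hbasis : ∀ i : Fin n, σ (i, true) ≠ (i, false))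
    (l : List (SRoot n)) (hnd : l.Nodup)
    (horth : ∀ r1 ∈ l, ∀ r2 ∈ l, r1 ≠ r2 → r1.1.1 = r2.1.1 ∨ Disj r1 r2)
    (hσ : σ = (l.map rootPerm).prod)
    {r : SRoot n} (hr : r ∈ l) :
    σ (r.ia, true) = (r.ja, !r.2) ∧ σ (r.ja, true) = (r.ia, !r.2) := by
  set i := r.ia with hi
  set j := r.ja with hj
  have hij : i ≠ j := ne_of_lt r.ilt
  have hpair : r.1.1 = (i, j) := rfl
  have H : ∀ x ∈ l, x.1.1 = (i, j) ∨ (x.ia ≠ i ∧ x.ia ≠ j ∧ x.ja ≠ i ∧ x.ja ≠ j) := by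
    intro x hx
    by_cases hxr : x = r
    · left; rw [hxr]; exact hpair
    · rcases horth x hx r hr hxr with h | h
      · left; exact h
      · right; exact ⟨h.1, h.2.1, h.2.2.1, h.2.2.2⟩
  set lf := l.filter (pairEq i j) with hlf
  have heval1 := prod_filter_eval i j hij l H i true (Or.inl rfl)
  have heval2 := prod_filter_eval i j hij l H j true (Or.inr rfl)
  rw [← hlf] at heval1 heval2
  have hrf : r ∈ lf := List.mem_filter.mpr ⟨hr, pairEq_iff.mpr hpair⟩
  have hallpair : ∀ x ∈ lf, x.1.1 = (i, j) := fun x hx => pairEq_iff.mp (List.of_mem_filter hx)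
  have hndf : lf.Nodup := hnd.filter _
  have hall : ∀ x ∈ lf, x = r := by
    by_contra hc
    push_neg at hc
    obtain ⟨x, hx, hxr⟩ := hc
    have hxp : x.1.1 = r.1.1 := (hallpair x hx).trans hpair.symm
    have hx2 : x.2 ≠ r.2 := fun h2 => hxr (sroot_ext hxp h2)
    clear_value lf
    rcases lf with _ | ⟨a, _ | ⟨b, rest⟩⟩
    · cases hrf
    · have hxa : x = a := by simpa using hx
      have hra : r = a := by simpa using hrf
      exact hxr (hxa.trans hra.symm)
    · -- length ≤ 2 forces rest = []
      have hlen : (a :: b :: rest).length ≤ 2 := by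
        have hmap : ((a :: b :: rest).map Prod.snd).Nodup := by
          refine hndf.map_on ?_
          intro u hu v hv huv
          exact sroot_ext ((hallpair u hu).trans (hallpair v hv).symm) huv
        have := hmap.length_le_card
        simp only [Fintype.card_bool] at this
        calc (a :: b :: rest).length = ((a :: b :: rest).map Prod.snd).length :=
            (List.length_map ..).symm
        _ ≤ 2 := this
      have hrest : rest = [] := by
        simp only [List.length_cons] at hlen
        cases rest with
        | nil => rfl
        | cons c t => exfalso; simp at hlen
      subst hrest
      -- lf = [a, b]
      have hab : a ≠ b := by
        rw [List.nodup_cons] at hndf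
        intro hh; exact hndf.1 (by rw [hh]; simp)
      have hpa := hallpair a (by simp)
      have hpb := hallpair b (by simp)
      have haib : a.2 ≠ b.2 := fun h2 => hab (sroot_ext (hpa.trans hpb.symm) h2)
      have hbia : b.ia = i := by rw [SRoot.ia, hpb]
      have hbja : b.ja = j := by rw [SRoot.ja, hpb]
      have haia : a.ia = i := by rw [SRoot.ia, hpa]
      have haja : a.ja = j := by rw [SRoot.ja, hpa]
      have hcomp : σ (i, true) = (i, false) := by
        rw [hσ, heval1]
        simp only [List.map_cons, List.map_nil, List.prod_cons, List.prod_nil, mul_one,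
          Equiv.Perm.mul_apply]
        rw [rootPerm_apply b, if_pos hbia.symm, hbja, rootPerm_apply a]
        rw [if_neg (by rw [haia]; exact Ne.symm hij), if_pos haja.symm, haia]
        cases ha2 : a.2 <;> cases hb2 : b.2 <;> simp_all
      exact hbasis i hcomp
  have hlr : lf = [r] := eq_single hndf hrf hall
  constructor
  · rw [hσ, heval1, hlr]
    simp only [List.map_cons, List.map_nil, List.prod_cons, List.prod_nil, mul_one]
    rw [rootPerm_apply, if_pos rfl]
    simp [hj]
  · rw [hσ, heval2, hlr]
    simp only [List.map_cons, List.map_nil, List.prod_cons, List.prod_nil, mul_one]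
    rw [rootPerm_apply, if_neg (Ne.symm hij), if_pos rfl]
    simp [hi]

end Stmt14Aux

open Stmt14Aux

/-- Every basis involution `σ` in the hyperoctahedral group (i.e. `σ² = 1`,
`σ(-i) = -σ(i)`, and `σ(i) ≠ -i` for all `i`) is the product of the reflections in a
unique set `D` of pairwise orthogonal roots of the form `ε_i ± ε_j`. -/

theorem stmt14 (n : ℕ) (σ : Equiv.Perm (Fin n × Bool))
    (hw : ∀ p : Fin n × Bool, σ (p.1, !p.2) = ((σ p).1, !(σ p).2))
    (hinv : σ * σ = 1)
    (hbasis : ∀ i : Fin n, σ (i, true) ≠ (i, false)) :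
    ∃ D : Finset (SRoot n),
      (∀ r1 ∈ D, ∀ r2 ∈ D, r1 ≠ r2 → (inner ℝ (rootVec r1) (rootVec r2) : ℝ) = 0) ∧
      (∃ l : List (SRoot n), l.Nodup ∧ l.toFinset = D ∧ σ = (l.map rootPerm).prod) ∧
      (∀ D' : Finset (SRoot n),
        (∀ r1 ∈ D', ∀ r2 ∈ D', r1 ≠ r2 → (inner ℝ (rootVec r1) (rootVec r2) : ℝ) = 0) →
        (∃ l : List (SRoot n), l.Nodup ∧ l.toFinset = D' ∧ σ = (l.map rootPerm).prod) →
        D' = D) := by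
  have hσσ : ∀ p, σ (σ p) = p := by
    intro p
    have := congrArg (fun e : Equiv.Perm (Fin n × Bool) => e p) hinv
    simpa [Equiv.Perm.mul_apply] using this
  classical
  set D : Finset (SRoot n) :=
    Finset.univ.filter (fun r : SRoot n => σ (r.ia, true) = (r.ja, !r.2)) with hD
  have memD : ∀ r : SRoot n, r ∈ D ↔ σ (r.ia, true) = (r.ja, !r.2) := by
    intro r; rw [hD, Finset.mem_filter]; simp
  -- pairwise disjointness in D
  have C1 : ∀ r1 ∈ D, ∀ r2 ∈ D, r1 ≠ r2 → Disj r1 r2 := by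
    intro r1 hr1 r2 hr2 hne
    have h1 := (memD r1).mp hr1
    have h2 := (memD r2).mp hr2
    have s1 := symm_lemma σ hw hσσ h1
    have s2 := symm_lemma σ hw hσσ h2
    refine ⟨?_, ?_, ?_, ?_⟩
    · intro h
      rw [h] at h1
      have he : (r1.ja, !r1.2) = (r2.ja, !r2.2) := by rw [← h1, h2]
      obtain ⟨e1, e2⟩ := Prod.ext_iff.mp he
      exact hne (sroot_ext (Prod.ext_iff.mpr ⟨h, e1⟩) (Bool.not_inj e2))
    · intro h
      rw [h] at h1
      have he : (r1.ja, !r1.2) = (r2.ia, !r2.2) := by rw [← h1, s2]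
      have e1 : r1.ja = r2.ia := congrArg Prod.fst he
      have : r1.ja < r1.ja := by
        calc r1.ja = r2.ia := e1
        _ < r2.ja := r2.ilt
        _ = r1.ia := h.symm
        _ < r1.ja := r1.ilt
      exact lt_irrefl _ this
    · intro h
      rw [h] at s1
      have he : (r1.ia, !r1.2) = (r2.ja, !r2.2) := by rw [← s1, h2]
      have e1 : r1.ia = r2.ja := congrArg Prod.fst he
      have : r1.ia < r1.ia := by
        calc r1.ia < r1.ja := r1.ilt
        _ = r2.ia := h
        _ < r2.ja := r2.ilt
        _ = r1.ia := e1.symm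
      exact lt_irrefl _ this
    · intro h
      rw [h] at s1
      have he : (r1.ia, !r1.2) = (r2.ia, !r2.2) := by rw [← s1, s2]
      obtain ⟨e1, e2⟩ := Prod.ext_iff.mp he
      exact hne (sroot_ext (Prod.ext_iff.mpr ⟨e1, h⟩) (Bool.not_inj e2))
  refine ⟨D, ?_, ?_, ?_⟩
  · -- orthogonality
    intro r1 hr1 r2 hr2 hne
    exact inner_of_disj (C1 r1 hr1 r2 hr2 hne)
  · -- existence of the list
    refine ⟨D.toList, Finset.nodup_toList D, Finset.toList_toFinset D, ?_⟩
    apply Equiv.ext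
    rintro ⟨k, t⟩
    by_cases hk : ∃ r ∈ D, r.ia = k ∨ r.ja = k
    · obtain ⟨r, hrD, hkr⟩ := hk
      have hij : r.ia ≠ r.ja := ne_of_lt r.ilt
      have H : ∀ x ∈ D.toList, x.1.1 = (r.ia, r.ja) ∨
          (x.ia ≠ r.ia ∧ x.ia ≠ r.ja ∧ x.ja ≠ r.ia ∧ x.ja ≠ r.ja) := by
        intro x hx
        by_cases hxr : x = r
        · left; rw [hxr]; exact rfl
        · right
          exact C1 x (Finset.mem_toList.mp hx) r hrD hxr
      have heval := prod_filter_eval r.ia r.ja hij D.toList H k t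
        (by rcases hkr with h | h; exacts [Or.inl h.symm, Or.inr h.symm])
      have hall : ∀ x ∈ D.toList.filter (pairEq r.ia r.ja), x = r := by
        intro x hx
        have hxl := List.mem_filter.mp hx
        have hxp : x.1.1 = (r.ia, r.ja) := pairEq_iff.mp hxl.2
        by_contra hxr
        have hdisj := C1 x (Finset.mem_toList.mp hxl.1) r hrD hxr
        exact hdisj.1 (by rw [SRoot.ia, hxp])
      have hrf : r ∈ D.toList.filter (pairEq r.ia r.ja) :=
        List.mem_filter.mpr ⟨Finset.mem_toList.mpr hrD, pairEq_iff.mpr rfl⟩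
      have hlr := eq_single ((Finset.nodup_toList D).filter _) hrf hall
      rw [heval, hlr]
      simp only [List.map_cons, List.map_nil, List.prod_cons, List.prod_nil, mul_one]
      have h1 := (memD r).mp hrD
      have h2 := symm_lemma σ hw hσσ h1
      rcases hkr with h | h <;> rw [← h] <;> cases t
      · rw [rootPerm_apply, if_pos rfl, neg_apply σ hw, h1]
        simp
      · rw [rootPerm_apply, if_pos rfl, h1]
        simp
      · rw [rootPerm_apply, if_neg (Ne.symm hij), if_pos rfl, neg_apply σ hw, h2]
        simp
      · rw [rootPerm_apply, if_neg (Ne.symm hij), if_pos rfl, h2]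
        simp
    · push_neg at hk
      rw [prod_fix D.toList k t (fun x hx =>
        ⟨Ne.symm (hk x (Finset.mem_toList.mp hx)).1, Ne.symm (hk x (Finset.mem_toList.mp hx)).2⟩)]
      have hm : (σ (k, true)).1 = k := by
        by_contra hne
        have heq : σ (k, true) = ((σ (k, true)).1, (σ (k, true)).2) := rfl
        rcases lt_or_gt_of_ne hne with hlt | hgt
        · -- (σ (k,true)).1 < k
          have hsy := symm_lemma σ hw hσσ heq
          have hx : (⟨⟨((σ (k, true)).1, k), hlt⟩, !(σ (k, true)).2⟩ : SRoot n) ∈ D := by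
            refine (memD _).mpr ?_
            show σ ((σ (k, true)).1, true) = (k, !!(σ (k, true)).2)
            rw [hsy]; simp
          exact (hk _ hx).2 rfl
        · -- k < (σ (k,true)).1
          have hx : (⟨⟨(k, (σ (k, true)).1), hgt⟩, !(σ (k, true)).2⟩ : SRoot n) ∈ D := by
            refine (memD _).mpr ?_
            show σ (k, true) = ((σ (k, true)).1, !!(σ (k, true)).2)
            simp
          exact (hk _ hx).1 rfl
      have hs : (σ (k, true)).2 = true := by
        by_contra hs
        have hs' : (σ (k, true)).2 = false := by
          cases hb : (σ (k, true)).2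
          · rfl
          · exact absurd hb hs
        exact hbasis k (Prod.ext_iff.mpr ⟨hm, hs'⟩)
      have hσk : σ (k, true) = (k, true) := Prod.ext_iff.mpr ⟨hm, hs⟩
      cases t
      · rw [neg_apply σ hw, hσk]; rfl
      · exact hσk
  · -- uniqueness
    intro D' horth' ⟨l', hnd', htf', hσ'⟩
    have hmem : ∀ x : SRoot n, x ∈ l' ↔ x ∈ D' := by
      intro x; rw [← htf', List.mem_toFinset]
    have hco : ∀ r1 ∈ l', ∀ r2 ∈ l', r1 ≠ r2 → r1.1.1 = r2.1.1 ∨ Disj r1 r2 := by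
      intro r1 hr1 r2 hr2 hne
      exact orth_cases (horth' r1 ((hmem r1).mp hr1) r2 ((hmem r2).mp hr2) hne)
    ext r
    rw [memD]
    constructor
    · intro hrD'
      exact (core_eval σ hbasis l' hnd' hco hσ' ((hmem r).mpr hrD')).1
    · intro hrD
      have hex : ∃ x ∈ l', x.ia = r.ia ∨ x.ja = r.ia := by
        by_contra hc
        push_neg at hc
        have hfix := prod_fix l' r.ia true (fun x hx =>
          ⟨Ne.symm (hc x hx).1, Ne.symm (hc x hx).2⟩)
        rw [← hσ', hrD] at hfix
        exact (ne_of_gt r.ilt) (congrArg Prod.fst hfix)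
      obtain ⟨x, hx, hxk⟩ := hex
      have hcore := core_eval σ hbasis l' hnd' hco hσ' hx
      rcases hxk with h | h
      · have he : (x.ja, !x.2) = (r.ja, !r.2) := by rw [← hcore.1, h, hrD]
        obtain ⟨e1, e2⟩ := Prod.ext_iff.mp he
        have hxr : x = r := sroot_ext (Prod.ext_iff.mpr ⟨h, e1⟩) (Bool.not_inj e2)
        exact (hmem r).mp (hxr ▸ hx)
      · have he : (x.ia, !x.2) = (r.ja, !r.2) := by rw [← hcore.2, h, hrD]
        have e1 : x.ia = r.ja := congrArg Prod.fst he
        exfalso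
        have : x.ia < x.ia := by
          calc x.ia < x.ja := x.ilt
          _ = r.ia := h
          _ < r.ja := r.ilt
          _ = x.ia := e1.symm
        exact lt_irrefl _ this
end
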